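/- Let h : ℝ^k → ℝ be C¹ and convex with linear growth, and assume the recession function h*(z) = lim_{t→0⁺} t·h(z/t) exists and is finite for all z. Suppose that for all z₁, z₂: (Dh(z₂), z₂ - z₁) ≤ h(z₁) + h(z₂). Then h* is even: h*(z) = h*(-z) for all z ∈ ℝ^k. -/

import Mathlib

open RealInnerProductSpace Filter

/-- Gradient inequality for a convex differentiable function. -/
lemma grad_ineq_aux {k : ℕ} (h : EuclideanSpace ℝ (Fin k) → ℝ)
    (Dh : EuclideanSpace ℝ (Fin k) → EuclideanSpace ℝ (Fin k))
    (hdiff : ∀ z, HasGradientAt h (Dh z) z)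
    (hconv : ConvexOn ℝ Set.univ h)
    (x y : EuclideanSpace ℝ (Fin k)) :
    h x + ⟪Dh x, y - x⟫ ≤ h y := by
  set c : ℝ → EuclideanSpace ℝ (Fin k) := fun t => x + t • (y - x) with hc
  have hcderiv : HasDerivAt c (y - x) 0 := by
    have : HasDerivAt (fun t : ℝ => t • (y - x)) ((1 : ℝ) • (y - x)) 0 :=
      (hasDerivAt_id (0:ℝ)).smul_const (y - x)
    have h1 : HasDerivAt (fun t : ℝ => t • (y - x)) (y - x) 0 := by simpa using this
    exact h1.const_add x
  have hg : HasDerivAt (fun t => h (c t)) ⟪Dh x, y - x⟫ 0 := by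
    have hc0 : c 0 = x := by simp [hc]
    have := HasFDerivAt.comp_hasDerivAt 0 (hc0.symm ▸ (hdiff x).hasFDerivAt) hcderiv
    rw [hc0] at this
    exact this
  have hgc : ConvexOn ℝ Set.univ (fun t => h (c t)) := by
    have haff : ConvexOn ℝ ((AffineMap.lineMap x y : ℝ →ᵃ[ℝ] _) ⁻¹' Set.univ)
        (h ∘ (AffineMap.lineMap x y : ℝ →ᵃ[ℝ] _)) :=
      hconv.comp_affineMap _
    have : ((AffineMap.lineMap x y : ℝ →ᵃ[ℝ] _) ⁻¹' Set.univ) = Set.univ := by simp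
    rw [this] at haff
    convert haff using 2 with t
    simp [hc, AffineMap.lineMap_apply, Function.comp]
    abel
  have hslope := hgc.le_slope_of_hasDerivWithinAt (Set.mem_univ (0:ℝ)) (Set.mem_univ (1:ℝ))
    one_pos (hg.hasDerivWithinAt)
  have hc0 : c 0 = x := by simp [hc]
  have hc1 : c 1 = y := by simp [hc]
  rw [slope_def_field, hc0, hc1] at hslope
  simp only [sub_zero, div_one] at hslope
  linarith

/-- If `h` is `C¹`, convex with linear growth and satisfies the symmetry inequality
`(Dh(z₂), z₂ - z₁) ≤ h(z₁) + h(z₂)`, then its recession function is even. -/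
theorem recession_even {k : ℕ} (h : EuclideanSpace ℝ (Fin k) → ℝ)
    (Dh : EuclideanSpace ℝ (Fin k) → EuclideanSpace ℝ (Fin k))
    (hdiff : ∀ z, HasGradientAt h (Dh z) z)
    (hDhcont : Continuous Dh)
    (hconv : ConvexOn ℝ Set.univ h)
    (A B : ℝ) (hgrowth : ∀ z, |h z| ≤ A * ‖z‖ + B)
    (hstar : EuclideanSpace ℝ (Fin k) → ℝ)
    (hlim : ∀ z, Tendsto (fun t : ℝ => t * h (t⁻¹ • z))
        (nhdsWithin (0 : ℝ) (Set.Ioi 0)) (nhds (hstar z)))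
    (hsymm : ∀ z₁ z₂, ⟪Dh z₂, z₂ - z₁⟫ ≤ h z₁ + h z₂) :
    ∀ z, hstar z = hstar (-z) := by
  have key : ∀ z, hstar z ≤ hstar (-z) := by
    intro z
    have hA : Tendsto (fun t : ℝ => t * h (t⁻¹ • z) - 2 * (t * h 0))
        (nhdsWithin (0 : ℝ) (Set.Ioi 0)) (nhds (hstar z)) := by
      have h2 : Tendsto (fun t : ℝ => 2 * (t * h 0))
          (nhdsWithin (0 : ℝ) (Set.Ioi 0)) (nhds 0) := by
        have : Tendsto (fun t : ℝ => 2 * (t * h 0)) (nhds 0) (nhds (2 * (0 * h 0))) :=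
          (continuous_const.mul (continuous_id.mul continuous_const)).tendsto 0
        simpa using this.mono_left nhdsWithin_le_nhds
      simpa using (hlim z).sub h2
    have hB := hlim (-z)
    refine le_of_tendsto_of_tendsto hA hB ?_
    filter_upwards [self_mem_nhdsWithin] with t ht
    have ht0 : (0:ℝ) < t := ht
    set x : EuclideanSpace ℝ (Fin k) := t⁻¹ • z with hx
    have hgi := grad_ineq_aux h Dh hdiff hconv x 0
    have hs := hsymm (-x) x
    have hinner : ⟪Dh x, x - -x⟫ = 2 * ⟪Dh x, x⟫ := by
      rw [sub_neg_eq_add]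
      have : x + x = (2:ℝ) • x := by module
      rw [this, real_inner_smul_right]
    have hgi' : h x - h 0 ≤ ⟪Dh x, x⟫ := by
      have : ⟪Dh x, (0:EuclideanSpace ℝ (Fin k)) - x⟫ = -⟪Dh x, x⟫ := by
        simp
      rw [this] at hgi
      linarith
    have hineq : h x - 2 * h 0 ≤ h (-x) := by
      rw [hinner] at hs
      linarith
    have hxneg : t⁻¹ • (-z) = -x := by simp [hx]
    rw [hxneg]
    nlinarith [hineq, ht0.le]
  intro z
  have := key z
  have := key (-z)
  simp only [neg_neg] at this
  linarith
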